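/- Let a₁ ≠ a₂ ∈ ℝ² and γ ∈ (0, |a₁ − a₂|/2), so that no point of ℝ² is simultaneously within distance γ of both a₁ and a₂. Let β ∈ (0,1), C₀ > 0, and let R ≤ R' ≤ 4R with R sufficiently large (depending on β, C₀). Let u : ℝ² → ℝ² be continuous. Assume (coordinates chosen so the scale-R' junction is at the origin with a₁–a₂ interface along the positive y-axis): |u(x,y) − a₁| ≤ γ whenever (x,y) ∈ B_{R'}, x ≤ −C₀R'^β and y ≥ C₀R'^β; and |u(x,y) − a₂| ≤ γ whenever (x,y) ∈ B_{R'}, x ≥ C₀R'^β and y ≥ C₀R'^β. Assume further there are points D = (x_D, y_D) with |D| ≤ R/100 and A = (x_A, y_A) ∈ ∂B_R with y_A ≥ R/2 such that the analogous statements hold at scale R with respect to the segment DA: |u(z) − a₁| ≤ γ for z ∈ B_R lying on the left of the line through D and A at distance ≥ 3C₀R^β from it and at height y ≥ C₀R^β, and |u(z) − a₂| ≤ γ for the symmetric right-side region. Then |x_A − x_D| ≤ 48 C₀ R^β; consequently the angle θ between DA and the positive y-axis satisfies |θ| ≤ C R^{β−1} for a constant C depending only on C₀. -/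

import Mathlib

open MeasureTheory Metric Filter
open scoped RealInnerProductSpace

noncomputable section

/-- Squared Euclidean norm of the full gradient of `u : ℂ → ℂ`
(`|∇u|² = |∂_x u|² + |∂_y u|²`). -/
def gradSq (u : ℂ → ℂ) (z : ℂ) : ℝ :=
  ‖fderiv ℝ u z 1‖ ^ 2 + ‖fderiv ℝ u z Complex.I‖ ^ 2

/-- The Allen–Cahn energy `E(u,Ω) = ∫_Ω (½|∇u|² + W(u))`. -/
def energy (W : ℂ → ℝ) (u : ℂ → ℂ) (Ω : Set ℂ) : ℝ :=
  ∫ z in Ω, ((1 / 2) * gradSq u z + W (u z))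

/-- Minimizing solution in the sense of De Giorgi. -/
def IsMinimizingSolution (W : ℂ → ℝ) (u : ℂ → ℂ) : Prop :=
  ∀ Ω : Set ℂ, IsOpen Ω → Bornology.IsBounded Ω →
    ∀ v : ℂ → ℂ, ContDiff ℝ 1 v → HasCompactSupport v → tsupport v ⊆ Ω →
      energy W u Ω ≤ energy W (u + v) Ω

/-- Hypothesis (H1) on the triple-well potential. -/
structure H1 (W : ℂ → ℝ) (a : Fin 3 → ℂ) (M c₁ c₂ : ℝ) : Prop where
  smooth : ContDiff ℝ 2 W
  nonneg : ∀ z, 0 ≤ W z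
  zeroSet : ∀ z, W z = 0 ↔ ∃ i, z = a i
  inj : Function.Injective a
  coercive : ∀ z : ℂ, M < ‖z‖ → 0 < ⟪gradient W z, z⟫
  c₁pos : 0 < c₁
  c₁lt : c₁ < c₂
  hessLower : ∀ (i : Fin 3) (ξ : ℂ), c₁ * ‖ξ‖ ^ 2 ≤ iteratedFDeriv ℝ 2 W (a i) ![ξ, ξ]
  hessUpper : ∀ (i : Fin 3) (ξ : ℂ), iteratedFDeriv ℝ 2 W (a i) ![ξ, ξ] ≤ c₂ * ‖ξ‖ ^ 2

/-- The 1D action of a path. -/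
def action1D (W : ℂ → ℝ) (U : ℝ → ℂ) : ℝ :=
  ∫ t : ℝ, ((1 / 2) * ‖deriv U t‖ ^ 2 + W (U t))

/-- Actions of 1D connections between two wells. -/
def connectionActions (W : ℂ → ℝ) (p q : ℂ) : Set ℝ :=
  {e | ∃ U : ℝ → ℂ, Differentiable ℝ U ∧
    Tendsto U atBot (nhds p) ∧ Tendsto U atTop (nhds q) ∧ e = action1D W U}

/-- Hypothesis (H2): all connection actions are minimized, with common minimal value `σ`. -/
structure H2 (W : ℂ → ℝ) (a : Fin 3 → ℂ) (σ : ℝ) : Prop where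
  pos : 0 < σ
  least : ∀ i j : Fin 3, i ≠ j → IsLeast (connectionActions W (a i) (a j)) σ

/-- The constants `δ_W, c_W, C_W` from the potential estimate near the wells. -/
structure WellConstants (W : ℂ → ℝ) (a : Fin 3 → ℂ) (δW cW CW : ℝ) : Prop where
  δWpos : 0 < δW
  cWpos : 0 < cW
  cWle : cW ≤ CW
  near : ∀ (i : Fin 3) (u : ℂ), ‖u - a i‖ < δW →
    (1 / 2) * cW * ‖u - a i‖ ^ 2 ≤ W u ∧ W u ≤ (1 / 2) * CW * ‖u - a i‖ ^ 2
  far : ∀ (δ : ℝ) (u : ℂ), 0 ≤ δ → δ < δW → (∀ i : Fin 3, δ ≤ ‖u - a i‖) →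
    (1 / 2) * cW * δ ^ 2 ≤ W u

/-- Line energy (tangential Dirichlet part plus potential, with respect to arclength)
of `u` along the part of the circle of radius `R` parametrized by angles in `s`. -/
def circleEnergyOn (W : ℂ → ℝ) (u : ℂ → ℂ) (R : ℝ) (s : Set ℝ) : ℝ :=
  ∫ θ in s, ((1 / (2 * R)) * ‖deriv (fun t => u (circleMap 0 R t)) θ‖ ^ 2
    + R * W (u (circleMap 0 R θ)))

/-- Total line energy `∫_{∂B_R} (½|∂_T u|² + W(u)) dH¹` along the circle of radius `R`. -/
def circleEnergy (W : ℂ → ℝ) (u : ℂ → ℂ) (R : ℝ) : ℝ :=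
  circleEnergyOn W u R (Set.Ico 0 (2 * Real.pi))

/-- `u` minimizes the energy on `Ω` among (continuous) competitors with its own
boundary values. -/
def MinimizesWithBV (W : ℂ → ℝ) (u : ℂ → ℂ) (Ω : Set ℂ) : Prop :=
  ∀ v : ℂ → ℂ, Continuous v → (∀ z ∉ Ω, v z = u z) → energy W u Ω ≤ energy W v Ω

/-- An open sector with vertex `p` and aperture angles `(θ₁, θ₂)`. -/
def Sector (p : ℂ) (θ₁ θ₂ : ℝ) : Set ℂ :=
  {z | ∃ r θ : ℝ, 0 < r ∧ θ₁ < θ ∧ θ < θ₂ ∧ z = p + r * Complex.exp (θ * Complex.I)}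

/-- A triple junction map centered at `p`: equal to `a k` on the three open sectors with
vertex `p` and opening angle `2π/3`. -/
def IsTripleJunctionMap (a : Fin 3 → ℂ) (p : ℂ) (u₀ : ℂ → ℂ) : Prop :=
  ∃ φ : ℝ, ∀ k : Fin 3,
    ∀ z ∈ Sector p (φ + 2 * Real.pi * ((k : ℕ) : ℝ) / 3)
        (φ + 2 * Real.pi * (((k : ℕ) : ℝ) + 1) / 3),
      u₀ z = a k

/-- The standing setting: a bounded minimizing solution with energy pinching at scale `R₀`. -/
structure Standing (W : ℂ → ℝ) (a : Fin 3 → ℂ) (σ M ε R₀ : ℝ) (u : ℂ → ℂ) : Prop where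
  minimizing : IsMinimizingSolution W u
  diff : Differentiable ℝ u
  bound : ∀ z, ‖u z‖ + Real.sqrt (gradSq u z) ≤ M
  Rpos : 0 < R₀
  circle_lb : 3 * σ - ε ≤ circleEnergy W u R₀
  circle_ub : circleEnergy W u R₀ ≤ 3 * σ + ε
  bulk_lb : 3 * σ - ε ≤ energy W u (Metric.ball 0 R₀) / R₀
  bulk_ub : energy W u (Metric.ball 0 R₀) / R₀ ≤ 3 * σ + ε

/-- The arc structure on `∂B_{R₀}`: three well arcs `I₁`, `I₂`, `I₃` given in angles by
`[t0,t1]`, `[t2,t3]`, `[t4,t5]`, separated by the transition arcs `I₁₂ = [t1,t2]`,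
`I₂₃ = [t3,t4]`, `I₃₁ = [t5, t0+2π]`. -/
structure ArcSetup (a : Fin 3 → ℂ) (δ C₁ C₂ R₀ : ℝ) (u : ℂ → ℂ)
    (t0 t1 t2 t3 t4 t5 : ℝ) : Prop where
  h01 : t0 < t1
  h12 : t1 < t2
  h23 : t2 < t3
  h34 : t3 < t4
  h45 : t4 < t5
  h50 : t5 < t0 + 2 * Real.pi
  end0l : ‖u (circleMap 0 R₀ t0) - a 0‖ ≤ δ
  end0r : ‖u (circleMap 0 R₀ t1) - a 0‖ ≤ δ
  end1l : ‖u (circleMap 0 R₀ t2) - a 1‖ ≤ δ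
  end1r : ‖u (circleMap 0 R₀ t3) - a 1‖ ≤ δ
  end2l : ‖u (circleMap 0 R₀ t4) - a 2‖ ≤ δ
  end2r : ‖u (circleMap 0 R₀ t5) - a 2‖ ≤ δ
  phase0 : ∀ s ∈ Set.Icc t0 t1, ∀ j : Fin 3, j ≠ 0 → δ < ‖u (circleMap 0 R₀ s) - a j‖
  phase1 : ∀ s ∈ Set.Icc t2 t3, ∀ j : Fin 3, j ≠ 1 → δ < ‖u (circleMap 0 R₀ s) - a j‖
  phase2 : ∀ s ∈ Set.Icc t4 t5, ∀ j : Fin 3, j ≠ 2 → δ < ‖u (circleMap 0 R₀ s) - a j‖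
  trans01 : ∀ s ∈ Set.Icc t1 t2, ∀ j : Fin 3, δ < ‖u (circleMap 0 R₀ s) - a j‖
  trans12 : ∀ s ∈ Set.Icc t3 t4, ∀ j : Fin 3, δ < ‖u (circleMap 0 R₀ s) - a j‖
  trans20 : ∀ s ∈ Set.Icc t5 (t0 + 2 * Real.pi), ∀ j : Fin 3, δ < ‖u (circleMap 0 R₀ s) - a j‖
  meas_lb : C₁ ≤ R₀ * ((t2 - t1) + (t4 - t3) + (t0 + 2 * Real.pi - t5))
  meas_ub : R₀ * ((t2 - t1) + (t4 - t3) + (t0 + 2 * Real.pi - t5)) ≤ C₂ / δ ^ 2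

/-- Midpoint of the arc with angles `θ₁ ≤ θ₂` on the circle of radius `R`. -/
def midpt (R θ₁ θ₂ : ℝ) : ℂ := circleMap 0 R ((θ₁ + θ₂) / 2)

/-- `D` minimizes the total distance to `A`, `B`, `C` over the closed disk of radius `R`. -/
def IsFermatPoint (R : ℝ) (A B C D : ℂ) : Prop :=
  D ∈ Metric.closedBall (0 : ℂ) R ∧
    ∀ P ∈ Metric.closedBall (0 : ℂ) R,
      dist D A + dist D B + dist D C ≤ dist P A + dist P B + dist P C

/-- The tangential derivative of `u` at `z` (along the circle centered at the origin
through `z`). -/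
def tangentialDeriv (u : ℂ → ℂ) (z : ℂ) : ℂ :=
  if z = 0 then 0 else ‖z‖⁻¹ • fderiv ℝ u z (Complex.I * z)

/-- Planar cross product of two vectors. -/
def cross2 (w v : ℂ) : ℝ := w.re * v.im - w.im * v.re

lemma aux_two_wells {a₁ a₂ : ℂ} {γ : ℝ} (hγ : γ < ‖a₁ - a₂‖ / 2) {w : ℂ}
    (h1 : ‖w - a₁‖ ≤ γ) (h2 : ‖w - a₂‖ ≤ γ) : False := by
  have h : ‖a₁ - a₂‖ ≤ ‖w - a₂‖ + ‖w - a₁‖ := by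
    have he : a₁ - a₂ = (w - a₂) - (w - a₁) := by ring
    rw [he]; exact norm_sub_le _ _
  linarith

lemma aux_arccos {x : ℝ} (hx : 0 ≤ x) :
    Real.arccos x ≤ Real.pi / 2 * Real.sqrt (1 - x ^ 2) := by
  have hπ := Real.pi_pos
  have h1 : Real.arccos x ≤ Real.pi / 2 := Real.arccos_le_pi_div_two.mpr hx
  have h2 := Real.mul_le_sin (Real.arccos_nonneg x) h1
  rw [Real.sin_arccos, div_mul_eq_mul_div, div_le_iff₀ hπ] at h2
  nlinarith [h2]


set_option maxHeartbeats 1000000 in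
/-- comparison of the interface directions at two consecutive scales
`R ≤ R' ≤ 4R`. If at scale `R'` the `a₁`–`a₂` interface is vertical through the origin
and at scale `R` it follows the segment `DA`, then `|x_A - x_D| ≤ 48 C₀ R^β`, so the
angle `θ` between `DA` and the positive `y`-axis satisfies `|θ| ≤ C R^{β-1}`. -/
theorem statement17 (a₁ a₂ : ℂ) (γ β C₀ : ℝ)
    (ha : a₁ ≠ a₂) (hγ0 : 0 < γ) (hγ : γ < ‖a₁ - a₂‖ / 2)
    (hβ0 : 0 < β) (hβ1 : β < 1) (hC₀ : 0 < C₀) :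
    ∃ C R₁ : ℝ, 0 < C ∧
      ∀ R R' : ℝ, R₁ ≤ R → R ≤ R' → R' ≤ 4 * R →
        ∀ u : ℂ → ℂ, Continuous u →
        (∀ z ∈ ball (0 : ℂ) R', z.re ≤ -(C₀ * R' ^ β) → C₀ * R' ^ β ≤ z.im →
          ‖u z - a₁‖ ≤ γ) →
        (∀ z ∈ ball (0 : ℂ) R', C₀ * R' ^ β ≤ z.re → C₀ * R' ^ β ≤ z.im →
          ‖u z - a₂‖ ≤ γ) →
        ∀ D A : ℂ, ‖D‖ ≤ R / 100 → A ∈ sphere (0 : ℂ) R → R / 2 ≤ A.im →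
        (∀ z ∈ ball (0 : ℂ) R, 3 * C₀ * R ^ β * ‖A - D‖ ≤ cross2 (A - D) (z - D) →
          C₀ * R ^ β ≤ z.im → ‖u z - a₁‖ ≤ γ) →
        (∀ z ∈ ball (0 : ℂ) R, cross2 (A - D) (z - D) ≤ -(3 * C₀ * R ^ β * ‖A - D‖) →
          C₀ * R ^ β ≤ z.im → ‖u z - a₂‖ ≤ γ) →
        |A.re - D.re| ≤ 48 * C₀ * R ^ β ∧
        InnerProductGeometry.angle (A - D) Complex.I ≤ C * R ^ (β - 1) := by
  refine ⟨200 * C₀, max 2 ((16 * C₀) ^ ((1 - β)⁻¹)), by linarith, ?_⟩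
  intro R R' hR₁ hRR' hR'4 u hu hW1 hW2 D A hD hA hAim hDA1 hDA2
  have hβ' : (0:ℝ) < 1 - β := by linarith
  have hR2 : (2:ℝ) ≤ R := le_trans (le_max_left _ _) hR₁
  have hR0 : (0:ℝ) < R := by linarith
  have hR'0 : (0:ℝ) < R' := by linarith
  have hP0 : 0 < C₀ * R ^ β := by positivity
  have h16P : 16 * (C₀ * R ^ β) ≤ R := by
    have h1 : (16 * C₀) ^ ((1 - β)⁻¹) ≤ R := le_trans (le_max_right _ _) hR₁
    have h2 : ((16 * C₀) ^ ((1 - β)⁻¹)) ^ (1 - β) ≤ R ^ (1 - β) :=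
      Real.rpow_le_rpow (by positivity) h1 hβ'.le
    rw [← Real.rpow_mul (by positivity), inv_mul_cancel₀ hβ'.ne', Real.rpow_one] at h2
    have h3 : (16 * C₀) * R ^ β ≤ R ^ (1 - β) * R ^ β :=
      mul_le_mul_of_nonneg_right h2 (by positivity)
    rw [← Real.rpow_add hR0] at h3
    norm_num at h3
    linarith
  have hPc : C₀ * R ^ β ≤ C₀ * R' ^ β :=
    mul_le_mul_of_nonneg_left (Real.rpow_le_rpow hR0.le hRR' hβ0.le) hC₀.le
  have hc0 : 0 < C₀ * R' ^ β := by positivity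
  have hc4 : C₀ * R' ^ β ≤ 4 * (C₀ * R ^ β) := by
    have h1 : R' ^ β ≤ (4 * R) ^ β := Real.rpow_le_rpow hR'0.le hR'4 hβ0.le
    have h2 : (4 * R : ℝ) ^ β = 4 ^ β * R ^ β := Real.mul_rpow (by norm_num) hR0.le
    have h3 : (4:ℝ) ^ β ≤ 4 ^ (1:ℝ) :=
      Real.rpow_le_rpow_of_exponent_le (by norm_num) hβ1.le
    rw [Real.rpow_one] at h3
    have h4 : (4:ℝ) ^ β * R ^ β ≤ 4 * R ^ β :=
      mul_le_mul_of_nonneg_right h3 (by positivity)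
    calc C₀ * R' ^ β ≤ C₀ * ((4 * R) ^ β) := mul_le_mul_of_nonneg_left h1 hC₀.le
      _ = C₀ * (4 ^ β * R ^ β) := by rw [h2]
      _ ≤ C₀ * (4 * R ^ β) := mul_le_mul_of_nonneg_left h4 hC₀.le
      _ = 4 * (C₀ * R ^ β) := by ring
  -- coordinate bounds
  have hAnorm : ‖A‖ = R := mem_sphere_zero_iff_norm.mp hA
  have hDre : |D.re| ≤ R / 100 := by
    have := Complex.abs_re_le_norm D
    linarith
  have hDim : |D.im| ≤ R / 100 := by
    have := Complex.abs_im_le_norm D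
    linarith
  have hDre' := abs_le.mp hDre
  have hDim' := abs_le.mp hDim
  have hAim' : A.im ≤ R := by
    have h1 := Complex.abs_im_le_norm A
    rw [hAnorm] at h1
    exact le_trans (le_abs_self _) h1
  have hL_ub : ‖A - D‖ ≤ R + R / 100 := by
    have := norm_sub_le A D
    linarith [hAnorm]
  have hL_lb : R - R / 100 ≤ ‖A - D‖ := by
    have := norm_sub_norm_le A D
    linarith [hAnorm]
  have hLpos : 0 < ‖A - D‖ := by linarith
  -- the two key one-sided estimates
  have keyR : ∀ h : ℝ, R/3 ≤ h → h ≤ 2*R/3 →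
      (A.re - D.re) * (h - D.im) - (A.im - D.im) * (C₀ * R' ^ β - D.re)
        < 3 * C₀ * R ^ β * ‖A - D‖ := by
    intro h hh1 hh2
    by_contra hcon
    push_neg at hcon
    set z : ℂ := (↑(C₀ * R' ^ β) : ℂ) + (h : ℂ) * Complex.I with hz
    have hzre : z.re = C₀ * R' ^ β := by simp [hz]
    have hzim : z.im = h := by simp [hz]
    have hch : C₀ * R' ^ β ≤ h := by linarith
    have hzball : z ∈ ball (0:ℂ) R := by
      rw [mem_ball_zero_iff]
      have h1 := Complex.norm_le_abs_re_add_abs_im z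
      rw [hzre, hzim, abs_of_pos hc0, abs_of_pos (by linarith : (0:ℝ) < h)] at h1
      linarith
    have ha2 : ‖u z - a₂‖ ≤ γ := hW2 z (ball_subset_ball hRR' hzball)
      (le_of_eq hzre.symm) (by rw [hzim]; exact hch)
    have hcr : cross2 (A - D) (z - D)
        = (A.re - D.re) * (h - D.im) - (A.im - D.im) * (C₀ * R' ^ β - D.re) := by
      simp [cross2, Complex.sub_re, Complex.sub_im, hzre, hzim]
    have ha1 : ‖u z - a₁‖ ≤ γ := hDA1 z hzball (by rw [hcr]; exact hcon)
      (by rw [hzim]; linarith)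
    exact aux_two_wells hγ ha1 ha2
  have keyL : ∀ h : ℝ, R/3 ≤ h → h ≤ 2*R/3 →
      -(3 * C₀ * R ^ β * ‖A - D‖)
        < (A.re - D.re) * (h - D.im) - (A.im - D.im) * (-(C₀ * R' ^ β) - D.re) := by
    intro h hh1 hh2
    by_contra hcon
    push_neg at hcon
    set z : ℂ := (↑(-(C₀ * R' ^ β)) : ℂ) + (h : ℂ) * Complex.I with hz
    have hzre : z.re = -(C₀ * R' ^ β) := by simp [hz]
    have hzim : z.im = h := by simp [hz]
    have hch : C₀ * R' ^ β ≤ h := by linarith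
    have hzball : z ∈ ball (0:ℂ) R := by
      rw [mem_ball_zero_iff]
      have h1 := Complex.norm_le_abs_re_add_abs_im z
      rw [hzre, hzim, abs_neg, abs_of_pos hc0, abs_of_pos (by linarith : (0:ℝ) < h)] at h1
      linarith
    have ha1 : ‖u z - a₁‖ ≤ γ := hW1 z (ball_subset_ball hRR' hzball)
      (le_of_eq hzre) (by rw [hzim]; exact hch)
    have hcr : cross2 (A - D) (z - D)
        = (A.re - D.re) * (h - D.im) - (A.im - D.im) * (-(C₀ * R' ^ β) - D.re) := by
      simp [cross2, Complex.sub_re, Complex.sub_im, hzre, hzim]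
    have ha2 : ‖u z - a₂‖ ≤ γ := hDA2 z hzball (by rw [hcr]; exact hcon)
      (by rw [hzim]; linarith)
    exact aux_two_wells hγ ha1 ha2
  have k1 := keyR (R/3) le_rfl (by linarith)
  have k2 := keyR (2*R/3) (by linarith) le_rfl
  have k3 := keyL (R/3) le_rfl (by linarith)
  have k4 := keyL (2*R/3) (by linarith) le_rfl
  have hq0 : 0 ≤ A.im - D.im := by linarith
  have e1 : (A.re - D.re) * (R/3)
      < 6 * C₀ * R ^ β * ‖A - D‖ + 2 * (A.im - D.im) * (C₀ * R' ^ β) := by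
    linarith only [k2, k3]
  have e2 : -((A.re - D.re) * (R/3))
      < 6 * C₀ * R ^ β * ‖A - D‖ + 2 * (A.im - D.im) * (C₀ * R' ^ β) := by
    linarith only [k1, k4]
  have b1 : 6 * C₀ * R ^ β * ‖A - D‖ ≤ 6 * (C₀ * R ^ β) * (R + R/100) := by
    have := mul_le_mul_of_nonneg_left hL_ub (by positivity : (0:ℝ) ≤ 6 * (C₀ * R ^ β))
    linarith only [this]
  have b2 : 2 * (A.im - D.im) * (C₀ * R' ^ β) ≤ 2 * (R + R/100) * (4 * (C₀ * R ^ β)) := by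
    have hq_ub : A.im - D.im ≤ R + R / 100 := by linarith only [hAim', hDim'.1]
    have := mul_le_mul hq_ub hc4 hc0.le (by linarith only [hR0])
    linarith only [this]
  have ht48 : |A.re - D.re| ≤ 48 * C₀ * R ^ β := by
    have hPR := mul_pos hP0 hR0
    have hs1 : (A.re - D.re) * (R/3) < (48 * (C₀ * R ^ β)) * (R/3) := by
      linarith only [e1, b1, b2, hPR]
    have hs2 : (-(A.re - D.re)) * (R/3) < (48 * (C₀ * R ^ β)) * (R/3) := by
      linarith only [e2, b1, b2, hPR]
    have hR3 : (0:ℝ) < R/3 := by linarith only [hR0]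
    have h1 := lt_of_mul_lt_mul_right hs1 hR3.le
    have h2 := lt_of_mul_lt_mul_right hs2 hR3.le
    have : |A.re - D.re| ≤ 48 * (C₀ * R ^ β) :=
      abs_le.mpr ⟨by linarith only [h2], by linarith only [h1]⟩
    linarith only [this]
  refine ⟨ht48, ?_⟩
  -- angle estimate
  have hinner : ⟪A - D, Complex.I⟫ = A.im - D.im := by
    rw [Complex.inner]; simp [Complex.mul_re]; ring
  have hq_lb : R/2 - R/100 ≤ A.im - D.im := by linarith
  have hqL1 : (A.im - D.im) / ‖A - D‖ ≤ 1 := by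
    have h1 : A.im - D.im ≤ ‖A - D‖ := by
      have := Complex.abs_im_le_norm (A - D)
      rw [Complex.sub_im] at this
      exact le_trans (le_abs_self _) this
    exact div_le_one_of_le₀ h1 hLpos.le
  have hqL0 : 0 ≤ (A.im - D.im) / ‖A - D‖ := div_nonneg (by linarith) hLpos.le
  rw [InnerProductGeometry.angle, hinner, Complex.norm_I, mul_one]
  have harc := aux_arccos hqL0
  have hL2 : ‖A - D‖ ^ 2 = (A.re - D.re) ^ 2 + (A.im - D.im) ^ 2 := by
    rw [Complex.sq_norm, Complex.normSq_apply,
      Complex.sub_re, Complex.sub_im]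
    ring
  have hsq : 1 - ((A.im - D.im) / ‖A - D‖) ^ 2 = (|A.re - D.re| / ‖A - D‖) ^ 2 := by
    have hne : (‖A - D‖ : ℝ) ≠ 0 := hLpos.ne'
    rw [div_pow, div_pow, sq_abs, eq_div_iff (pow_ne_zero 2 hne), sub_mul, one_mul,
      div_mul_cancel₀ _ (pow_ne_zero 2 hne)]
    linarith [hL2]
  rw [hsq, Real.sqrt_sq (by positivity)] at harc
  have hfin : Real.pi / 2 * (|A.re - D.re| / ‖A - D‖) ≤ 200 * C₀ * R ^ (β - 1) := by
    rw [Real.rpow_sub hR0, Real.rpow_one, ← mul_div_assoc, ← mul_div_assoc,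
      div_le_div_iff₀ hLpos hR0]
    have hπ4 := Real.pi_le_four
    have habs0 := abs_nonneg (A.re - D.re)
    have hm1 : 0 ≤ (4 - Real.pi) * (|A.re - D.re| * R) :=
      mul_nonneg (by linarith) (mul_nonneg habs0 hR0.le)
    have hm2 : |A.re - D.re| * R ≤ (48 * C₀ * R ^ β) * R :=
      mul_le_mul_of_nonneg_right ht48 hR0.le
    have hm3 : 200 * C₀ * R ^ β * (R - R/100) ≤ 200 * C₀ * R ^ β * ‖A - D‖ :=
      mul_le_mul_of_nonneg_left hL_lb (by positivity)
    linarith only [hm1, hm2, hm3, mul_pos hP0 hR0]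
  linarith [harc]
end
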